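/- The labelling f of Theorem 1 is injective on the vertices of a rooted symmetric tree and takes values in {0, 1, ..., h_1 - 1}, where h_1 is the number of vertices of the tree. -/
import Mathlib


/-- The labelling of Theorem 1 (Rofa 2021). A vertex at level `r = x.length + 1` of a
rooted symmetric tree with daughter degree sequence `k 1, ..., k (q-1)` and level numbers
`h` is identified with its sequence of edge indices `x = (x 1, ..., x (r-1))`, the entry
`x i` being `x.getD (i-1) 0`. Its label is
`x 1 * h 2 + x 2 * h 3 + ⋯ + x (r-1) * h r + (r-1)/2` if `r` is odd, and
`(k 1 - x 1) * h 2 - x 2 * h 3 - ⋯ - x (r-1) * h r - (r-2)/2` if `r` is even. -/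
def rofaLabel (k h : ℕ → ℕ) (x : List ℕ) : ℤ :=
  if (x.length + 1) % 2 = 1 then
    (∑ i ∈ Finset.range x.length, (x.getD i 0 : ℤ) * (h (i + 2) : ℤ)) +
      ((x.length / 2 : ℕ) : ℤ)
  else
    ((k 1 : ℤ) - (x.getD 0 0 : ℤ)) * (h 2 : ℤ) -
      (∑ i ∈ Finset.Icc 1 (x.length - 1), (x.getD i 0 : ℤ) * (h (i + 2) : ℤ)) -
      (((x.length - 1) / 2 : ℕ) : ℤ)

/-- `x` is a valid index sequence for a vertex of the rooted symmetric tree with `q`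
levels and daughter degree sequence `k 1, ..., k (q-1)`: it has length at most `q - 1`
and its `i`-th entry (the edge index `x i`, 1-based) is less than `k i`. -/
def ValidIdx (q : ℕ) (k : ℕ → ℕ) (x : List ℕ) : Prop :=
  x.length ≤ q - 1 ∧ ∀ i < x.length, x.getD i 0 < k (i + 1)

lemma rofa_nil (k h : ℕ → ℕ) : rofaLabel k h [] = 0 := by
  simp [rofaLabel]

lemma rofa_cons_even (k h : ℕ → ℕ) (a : ℕ) (x : List ℕ) (hx : x.length % 2 = 0) :
    rofaLabel k h (a :: x) =
      ((k 1 : ℤ) - a) * h 2 - rofaLabel (fun i => k (i+1)) (fun i => h (i+1)) x := by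
  unfold rofaLabel
  have h1 : ¬ ((a :: x).length + 1) % 2 = 1 := by simp; omega
  have h2 : (x.length + 1) % 2 = 1 := by omega
  rw [if_neg h1, if_pos h2]
  have hlen : (a :: x).length - 1 = x.length := by simp
  have hsum : (∑ i ∈ Finset.Icc 1 ((a :: x).length - 1),
      ((a :: x).getD i 0 : ℤ) * (h (i + 2) : ℤ))
      = ∑ i ∈ Finset.range x.length, (x.getD i 0 : ℤ) * (h (i + 3) : ℤ) := by
    rw [hlen, ← Finset.Ico_add_one_right_eq_Icc, Finset.sum_Ico_eq_sum_range]
    apply Finset.sum_congr (by simp)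
    intro i _
    have : 1 + i = i + 1 := by omega
    rw [this, List.getD_cons_succ]

  rw [hsum]
  simp only [List.getD_cons_zero, hlen]
  ring

lemma rofa_cons_odd (k h : ℕ → ℕ) (a : ℕ) (x : List ℕ) (hx : x.length % 2 = 1)
    (hh2 : (h 2 : ℤ) = 1 + (k 2 : ℤ) * (h 3 : ℤ)) :
    rofaLabel k h (a :: x) =
      ((a : ℤ) + 1) * h 2 - rofaLabel (fun i => k (i+1)) (fun i => h (i+1)) x := by
  unfold rofaLabel
  have h1 : ((a :: x).length + 1) % 2 = 1 := by simp; omega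
  have h2 : ¬ (x.length + 1) % 2 = 1 := by omega
  rw [if_pos h1, if_neg h2]
  have hn : 1 ≤ x.length := by omega
  have hsum : (∑ i ∈ Finset.range (a :: x).length,
      (((a :: x).getD i 0 : ℤ)) * (h (i + 2) : ℤ))
      = (a : ℤ) * h 2 + ∑ i ∈ Finset.range x.length, (x.getD i 0 : ℤ) * (h (i + 3) : ℤ) := by
    rw [List.length_cons, Finset.sum_range_succ']
    simp only [List.getD_cons_succ, List.getD_cons_zero]
    ring
  have hsplit : (∑ i ∈ Finset.range x.length, (x.getD i 0 : ℤ) * (h (i + 3) : ℤ))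
      = (x.getD 0 0 : ℤ) * h 3 +
        ∑ i ∈ Finset.Icc 1 (x.length - 1), (x.getD i 0 : ℤ) * (h (i + 2 + 1) : ℤ) := by
    have hicc : Finset.Icc 1 (x.length - 1) = Finset.Ico 1 x.length := by
      rw [← Finset.Ico_add_one_right_eq_Icc]
      congr 1
      omega
    rw [hicc, Finset.range_eq_Ico, Finset.sum_eq_sum_Ico_succ_bot hn]
  have hdiv : (((a :: x).length / 2 : ℕ) : ℤ) = (((x.length - 1) / 2 : ℕ) : ℤ) + 1 := by
    rw [List.length_cons]
    have : (x.length + 1) / 2 = (x.length - 1) / 2 + 1 := by omega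
    rw [this]
    push_cast
    ring
  rw [hsum, hsplit, hdiv]
  beta_reduce
  rw [hh2]
  ring

lemma rofa_aux : ∀ (q : ℕ) (k h : ℕ → ℕ), 1 ≤ q →
    (∀ i, 1 ≤ i → i ≤ q - 1 → 1 ≤ k i) →
    h q = 1 →
    (∀ i, 1 ≤ i → i ≤ q - 1 → h i = 1 + k i * h (i + 1)) →
    (∀ x : List ℕ, ValidIdx q k x →
      0 ≤ rofaLabel k h x ∧ rofaLabel k h x < (h 1 : ℤ)) ∧
    (∀ x y : List ℕ, ValidIdx q k x → ValidIdx q k y →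
      rofaLabel k h x = rofaLabel k h y → x = y) := by
  intro q
  induction q with
  | zero => intro k h hq; omega
  | succ q ih =>
    intro k h _ hk hhq hrec
    rcases Nat.eq_zero_or_pos q with hq0 | hq1
    · -- q + 1 = 1 : only the root
      subst hq0
      have hval : ∀ x : List ℕ, ValidIdx 1 k x → x = [] := by
        intro x hx
        have := hx.1
        simpa [List.length_eq_zero_iff] using this
      constructor
      · intro x hx
        rw [hval x hx, rofa_nil, hhq]
        norm_num
      · intro x y hx hy _
        rw [hval x hx, hval y hy]
    · -- inductive step
      set k' : ℕ → ℕ := fun i => k (i + 1) with hk'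
      set h' : ℕ → ℕ := fun i => h (i + 1) with hh'
      obtain ⟨bd, inj⟩ := ih k' h' hq1
        (fun i hi1 hi2 => hk (i + 1) (by omega) (by omega))
        (by exact hhq)
        (fun i hi1 hi2 => hrec (i + 1) (by omega) (by omega))
      -- basic facts
      have hk1 : 1 ≤ k 1 := hk 1 (by omega) (by omega)
      have h2pos : (1 : ℤ) ≤ (h 2 : ℤ) := by
        have hv : ValidIdx q k' [] := ⟨by simp, by simp⟩
        have h2 := (bd [] hv).2
        rw [rofa_nil] at h2
        have : h' 1 = h 2 := rfl
        rw [this] at h2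
        omega
      have hh1 : (h 1 : ℤ) = 1 + (k 1 : ℤ) * (h 2 : ℤ) := by
        have := hrec 1 (by omega) (by omega)
        push_cast [this]
        ring
      have hsplitV : ∀ (a : ℕ) (x : List ℕ),
          ValidIdx (q+1) k (a :: x) ↔ a < k 1 ∧ ValidIdx q k' x := by
        intro a x
        constructor
        · rintro ⟨hl, hi⟩
          refine ⟨by simpa using hi 0 (by simp), ⟨?_, ?_⟩⟩
          · simp only [List.length_cons] at hl
            omega
          · intro i hilt
            have := hi (i+1) (by simp ; omega)
            simpa [hk'] using this
        · rintro ⟨ha, hl, hi⟩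
          refine ⟨by simp ; omega, ?_⟩
          intro i hilt
          match i with
          | 0 => simpa using ha
          | (j+1) =>
            simp only [List.getD_cons_succ]
            exact hi j (by simp at hilt ; omega)
      have key : ∀ (a : ℕ) (x : List ℕ), a < k 1 → ValidIdx q k' x →
          ∃ c : ℤ, rofaLabel k h (a :: x) = c * (h 2 : ℤ) - rofaLabel k' h' x ∧
            1 ≤ c ∧ c ≤ (k 1 : ℤ) ∧
            c = (if x.length % 2 = 0 then (k 1 : ℤ) - (a : ℤ) else (a : ℤ) + 1) := by
        intro a x ha hx
        have ha' : (a : ℤ) < (k 1 : ℤ) := by exact_mod_cast ha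
        rcases Nat.even_or_odd x.length with he | ho
        · have he' : x.length % 2 = 0 := Nat.even_iff.1 he
          refine ⟨(k 1 : ℤ) - (a : ℤ), rofa_cons_even k h a x he', by omega, by omega, by
            rw [if_pos he']⟩
        · have ho' : x.length % 2 = 1 := Nat.odd_iff.1 ho
          have hq2 : 2 ≤ q := by
            have := hx.1
            omega
          have hh2 : (h 2 : ℤ) = 1 + (k 2 : ℤ) * (h 3 : ℤ) := by
            have := hrec 2 (by omega) (by omega)
            push_cast [this]
            ring
          refine ⟨(a : ℤ) + 1, rofa_cons_odd k h a x ho' hh2, by omega, by omega, by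
            rw [if_neg (by omega)]⟩
      have bound1 : ∀ x : List ℕ, ValidIdx (q+1) k x →
          0 ≤ rofaLabel k h x ∧ rofaLabel k h x < (h 1 : ℤ) := by
        intro x hx
        match x with
        | [] =>
          rw [rofa_nil, hh1]
          constructor
          · exact le_refl 0
          · nlinarith [h2pos, (show (1:ℤ) ≤ (k 1 : ℤ) by exact_mod_cast hk1)]
        | a :: x =>
          obtain ⟨ha, hx'⟩ := (hsplitV a x).1 hx
          obtain ⟨c, hf, hc1, hc2, -⟩ := key a x ha hx'
          obtain ⟨hb0, hb1⟩ := bd x hx'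
          have hb1' : rofaLabel k' h' x < (h 2 : ℤ) := hb1
          rw [hf]
          constructor
          · nlinarith
          · rw [hh1]
            nlinarith
      refine ⟨bound1, ?_⟩
      intro x y hx hy hfeq
      match x, y with
      | [], [] => rfl
      | [], b :: y =>
        exfalso
        obtain ⟨hb, hy'⟩ := (hsplitV b y).1 hy
        obtain ⟨c, hf, hc1, hc2, -⟩ := key b y hb hy'
        obtain ⟨hb0, hb1⟩ := bd y hy'
        have hb1' : rofaLabel k' h' y < (h 2 : ℤ) := hb1
        rw [rofa_nil, hf] at hfeq
        nlinarith
      | a :: x, [] =>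
        exfalso
        obtain ⟨ha, hx'⟩ := (hsplitV a x).1 hx
        obtain ⟨c, hf, hc1, hc2, -⟩ := key a x ha hx'
        obtain ⟨hb0, hb1⟩ := bd x hx'
        have hb1' : rofaLabel k' h' x < (h 2 : ℤ) := hb1
        rw [rofa_nil, hf] at hfeq
        nlinarith
      | a :: x, b :: y =>
        obtain ⟨ha, hx'⟩ := (hsplitV a x).1 hx
        obtain ⟨hb, hy'⟩ := (hsplitV b y).1 hy
        obtain ⟨c, hfc, hc1, hc2, hcdef⟩ := key a x ha hx'
        obtain ⟨d, hfd, hd1, hd2, hddef⟩ := key b y hb hy'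
        obtain ⟨hx0, hx1⟩ := bd x hx'
        obtain ⟨hy0, hy1⟩ := bd y hy'
        have hx1' : rofaLabel k' h' x < (h 2 : ℤ) := hx1
        have hy1' : rofaLabel k' h' y < (h 2 : ℤ) := hy1
        rw [hfc, hfd] at hfeq
        have hcd : c = d := by
          rcases lt_trichotomy c d with hlt | he | hgt
          · exfalso
            nlinarith
          · exact he
          · exfalso
            nlinarith
        have hfeq' : rofaLabel k' h' x = rofaLabel k' h' y := by
          rw [hcd] at hfeq
          linarith
        have hxy : x = y := inj x y hx' hy' hfeq'
        subst hxy
        have hab : a = b := by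
          rw [hcd, hddef] at hcdef
          by_cases hpar : x.length % 2 = 0
          · rw [if_pos hpar, if_pos hpar] at hcdef
            omega
          · rw [if_neg hpar, if_neg hpar] at hcdef
            omega
        rw [hab]

/-- The labelling `f` of Theorem 1 is injective on the vertices of a rooted symmetric
tree and takes values in `{0, 1, ..., h 1 - 1}`, where `h 1` is the number of vertices. -/
theorem rofaLabel_injective_range (q : ℕ) (k h : ℕ → ℕ) (hq : 1 ≤ q)
    (hk : ∀ i, 1 ≤ i → i ≤ q - 1 → 1 ≤ k i)
    (hhq : h q = 1)
    (hrec : ∀ i, 1 ≤ i → i ≤ q - 1 → h i = 1 + k i * h (i + 1)) :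
    (∀ x : List ℕ, ValidIdx q k x →
      0 ≤ rofaLabel k h x ∧ rofaLabel k h x < (h 1 : ℤ)) ∧
    (∀ x y : List ℕ, ValidIdx q k x → ValidIdx q k y →
      rofaLabel k h x = rofaLabel k h y → x = y) := by
  exact rofa_aux q k h hq hk hhq hrec
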